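/- Let W ∈ L(H) be a positive operator and A, B ∈ L(H) operators with closed range such that ker B = ker(A*W), and let T be the shorted operator of W to range A. Then the following are equivalent: (i) T is the minimum, with respect to the minus order, of the set F = {(AXB − I)*W(AXB − I) : X ∈ L(H)} (i.e. T ∈ F and T ⁻≤ Y for all Y ∈ F); (ii) the pair (W, range A) is compatible; (iii) T is the minimum of F with respect to the Loewner order (i.e. T ∈ F and T ≤ Y for all Y ∈ F). -/

import Mathlib

open ContinuousLinearMap
open scoped ComplexInnerProductSpace

noncomputable section

variable {H : Type*} [NormedAddCommGroup H] [InnerProductSpace ℂ H] [CompleteSpace H]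

/-- `M(W,S)`: the set of operators `X` with `0 ≤ X ≤ W` (Loewner order) and `range X ⊆ S^⊥`. -/
def MSet (W : H →L[ℂ] H) (S : Submodule ℂ H) : Set (H →L[ℂ] H) :=
  {X | X.IsPositive ∧ (W - X).IsPositive ∧ LinearMap.range (X).toLinearMap ≤ Sᗮ}

/-- `T` is the shorted operator of `W` to `S`, i.e. the maximum of `M(W,S)` in the Loewner
order. -/
def IsShorted (W : H →L[ℂ] H) (S : Submodule ℂ H) (T : H →L[ℂ] H) : Prop :=
  T ∈ MSet W S ∧ ∀ X ∈ MSet W S, (T - X).IsPositive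

/-- The minus order: `A ⁻≤ B` iff there are bounded idempotents `P, Q` with `A = PB` and
`A* = QB*`. -/
def MinusLE (A B : H →L[ℂ] H) : Prop :=
  ∃ P Q : H →L[ℂ] H, IsIdempotentElem P ∧ IsIdempotentElem Q ∧
    A = P ∘L B ∧ adjoint A = Q ∘L adjoint B

/-- The pair `(W, N)` is compatible: there is a bounded idempotent `Q` with range `N` such that
`WQ` is selfadjoint. -/
def Compatible (W : H →L[ℂ] H) (N : Submodule ℂ H) : Prop :=
  ∃ Q : H →L[ℂ] H, IsIdempotentElem Q ∧ LinearMap.range (Q).toLinearMap = N ∧ IsSelfAdjoint (W ∘L Q)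

/-- `M⁻(W,S)`: operators `X` with `X ⁻≤ W`, `range X ⊆ S^⊥` and `range X* ⊆ S^⊥`. -/
def MMinusSet (W : H →L[ℂ] H) (S : Submodule ℂ H) : Set (H →L[ℂ] H) :=
  {X | MinusLE X W ∧ LinearMap.range (X).toLinearMap ≤ Sᗮ ∧ LinearMap.range (adjoint X).toLinearMap ≤ Sᗮ}

/-- `X₀` is a `W`-inverse of `M` in `R(C)`: for every `x`, `X₀ x` is a `W`-weighted least squares
solution of `M z = C x`. -/
def WInverseIn (W M C X₀ : H →L[ℂ] H) : Prop :=
  ∀ x z : H, (⟪W (M (X₀ x) - C x), M (X₀ x) - C x⟫).re ≤ (⟪W (M z - C x), M z - C x⟫).re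

/-- The left weighted star order `A ₋*_W≤ B`. -/
def LStarW (W A B : H →L[ℂ] H) : Prop :=
  LinearMap.range (B).toLinearMap = LinearMap.range (A).toLinearMap ⊔ LinearMap.range (B - A).toLinearMap ∧
  LinearMap.range (A).toLinearMap ⊓ LinearMap.range (B - A).toLinearMap = ⊥ ∧
  LinearMap.range (B - A).toLinearMap ≤ LinearMap.ker (adjoint A ∘L W).toLinearMap

/-- The right weighted star order `A ≤*_W B`. -/
def RStarW (W A B : H →L[ℂ] H) : Prop :=
  LinearMap.range (adjoint B).toLinearMap =
    LinearMap.range (adjoint A).toLinearMap ⊔ LinearMap.range (adjoint B - adjoint A).toLinearMap ∧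
  LinearMap.range (adjoint A).toLinearMap ⊓ LinearMap.range (adjoint B - adjoint A).toLinearMap = ⊥ ∧
  LinearMap.range (adjoint B - adjoint A).toLinearMap ≤ LinearMap.ker (A ∘L W).toLinearMap

/-- The weighted star order `A *_W≤ B`. -/
def StarW (W A B : H →L[ℂ] H) : Prop :=
  LStarW W A B ∧ RStarW W A B

namespace Stmt11Aux


lemma ker_adjoint_eq (A : H →L[ℂ] H) :
    LinearMap.ker (adjoint A).toLinearMap = (LinearMap.range (A).toLinearMap)ᗮ := by
  ext x
  simp only [LinearMap.mem_ker, Submodule.mem_orthogonal]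
  constructor
  · rintro h u ⟨y, rfl⟩
    rw [← inner_conj_symm, ContinuousLinearMap.coe_coe, ← adjoint_inner_left,
      ← ContinuousLinearMap.coe_coe (adjoint A), h, inner_zero_left, map_zero]
  · intro h
    have h2 : ⟪adjoint A x, adjoint A x⟫ = 0 := by
      rw [adjoint_inner_right]
      exact h _ ⟨adjoint A x, rfl⟩
    exact inner_self_eq_zero.mp h2

lemma adjoint_vanish {Q : H →L[ℂ] H} {v : H}
    (hv : v ∈ (LinearMap.range (Q).toLinearMap)ᗮ) : adjoint Q v = 0 := by
  have : ⟪adjoint Q v, adjoint Q v⟫ = 0 := by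
    rw [adjoint_inner_right]
    exact (Submodule.mem_orthogonal _ _).mp hv _ ⟨adjoint Q v, rfl⟩
  exact inner_self_eq_zero.mp this

lemma op_eq_zero_of_inner (D : H →L[ℂ] H) (hsa : IsSelfAdjoint D)
    (h : ∀ x, (⟪D x, x⟫).re = 0) : D = 0 := by
  have hsym : (D : H →ₗ[ℂ] H).IsSymmetric :=
    isSelfAdjoint_iff_isSymmetric.mp hsa
  have h0 : ∀ x, ⟪D x, x⟫ = 0 := by
    intro x
    have him : (starRingEnd ℂ) ⟪D x, x⟫ = ⟪D x, x⟫ := by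
      rw [inner_conj_symm]
      exact (hsym x x).symm
    have : (⟪D x, x⟫).im = 0 := by
      have := congrArg Complex.im him
      rw [Complex.conj_im] at this
      linarith
    exact Complex.ext (h x) this
  have := (inner_map_self_eq_zero (D : H →ₗ[ℂ] H)).mp h0
  ext x
  exact congrFun (congrArg DFunLike.coe this) x



lemma Y_selfadjoint (W Z : H →L[ℂ] H) (hW : IsSelfAdjoint W) :
    IsSelfAdjoint (adjoint Z ∘L (W ∘L Z)) := by
  rw [ContinuousLinearMap.isSelfAdjoint_iff']
  rw [adjoint_comp, adjoint_comp, adjoint_adjoint, hW.adjoint_eq]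
  ext x; simp


lemma sa_inner_symm {T : H →L[ℂ] H} (hT : IsSelfAdjoint T) (p q : H) :
    ⟪T p, q⟫ = ⟪p, T q⟫ := by
  nth_rewrite 1 [← hT.adjoint_eq]
  exact adjoint_inner_left T q p

lemma inner_conj_apply (W Z : H →L[ℂ] H) (x : H) :
    ⟪(adjoint Z ∘L (W ∘L Z)) x, x⟫ = ⟪W (Z x), Z x⟫ := by
  rw [comp_apply, comp_apply, adjoint_inner_left]

lemma key_quad {W T : H →L[ℂ] H} {S : Submodule ℂ H}
    (hmem : T ∈ MSet W S) (x s : H) (hs : s ∈ S) :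
    (⟪T x, x⟫).re ≤ (⟪W (x - s), x - s⟫).re := by
  obtain ⟨hT1, hT2, hT3⟩ := hmem
  have hTs : ∀ u : H, ⟪T u, s⟫ = 0 := fun u => by
    have := (Submodule.mem_orthogonal _ _).mp (hT3 ⟨u, rfl⟩) s hs
    simp only [ContinuousLinearMap.coe_coe] at this
    rw [← inner_conj_symm, this, map_zero]
  have h3 : ⟪T s, x⟫ = 0 := by
    rw [sa_inner_symm hT1.isSelfAdjoint s x]
    exact (Submodule.mem_orthogonal _ _).mp (hT3 ⟨x, rfl⟩) s hs
  have key : ⟪T (x - s), x - s⟫ = ⟪T x, x⟫ := by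
    rw [map_sub, inner_sub_left, inner_sub_right, inner_sub_right, hTs x, hTs s, h3]
    ring
  have hpos := hT2.2 (x - s)
  rw [reApplyInnerSelf_apply, sub_apply, inner_sub_left] at hpos
  rw [RCLike.re_to_complex, Complex.sub_re] at hpos
  have := congrArg Complex.re key
  linarith

lemma loewner_min (W A B T : H →L[ℂ] H) (hW : W.IsPositive)
    (hT : IsShorted W (LinearMap.range (A).toLinearMap) T) (X : H →L[ℂ] H) :
    ((adjoint (A ∘L X ∘L B - 1) ∘L (W ∘L (A ∘L X ∘L B - 1))) - T).IsPositive := by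
  set Z := A ∘L X ∘L B - 1 with hZ
  constructor
  · exact isSelfAdjoint_iff_isSymmetric.mp ((Y_selfadjoint W Z hW.isSelfAdjoint).sub hT.1.1.isSelfAdjoint)
  · intro x
    rw [reApplyInnerSelf_apply, sub_apply, inner_sub_left, RCLike.re_to_complex,
      Complex.sub_re]
    have hYx : ⟪(adjoint Z ∘L (W ∘L Z)) x, x⟫ = ⟪W (Z x), Z x⟫ := inner_conj_apply W Z x
    have hZx : Z x = -(x - A (X (B x))) := by
      simp [hZ]
    have h2 : ⟪W (Z x), Z x⟫ = ⟪W (x - A (X (B x))), x - A (X (B x))⟫ := by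
      rw [hZx, map_neg, inner_neg_neg]
    have h3 := key_quad hT.1 x (A (X (B x))) ⟨X (B x), rfl⟩
    have := congrArg Complex.re (hYx.trans h2)
    linarith

lemma variational (W A B T X₀ : H →L[ℂ] H) (hW : W.IsPositive)
    (hT : IsShorted W (LinearMap.range (A).toLinearMap) T)
    (h0 : T = adjoint (A ∘L X₀ ∘L B - 1) ∘L (W ∘L (A ∘L X₀ ∘L B - 1))) (x : H) :
    W (x - A (X₀ (B x))) ∈ (LinearMap.range (A).toLinearMap)ᗮ := by
  set v := x - A (X₀ (B x)) with hv
  have hTx : (⟪T x, x⟫).re = (⟪W v, v⟫).re := by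
    rw [h0]
    have h1 : ⟪(adjoint (A ∘L X₀ ∘L B - 1) ∘L (W ∘L (A ∘L X₀ ∘L B - 1))) x, x⟫
        = ⟪W ((A ∘L X₀ ∘L B - 1) x), (A ∘L X₀ ∘L B - 1) x⟫ :=
      inner_conj_apply W (A ∘L X₀ ∘L B - 1) x
    have h2 : (A ∘L X₀ ∘L B - 1) x = -v := by simp [hv]
    rw [h1, h2, map_neg, inner_neg_neg]
  have hbase : ∀ c : ℂ, ∀ a ∈ LinearMap.range (A).toLinearMap,
      (⟪W v, v⟫).re ≤ (⟪W (v - c • a), v - c • a⟫).re := by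
    intro c a ha
    have hs : A (X₀ (B x)) + c • a ∈ LinearMap.range (A).toLinearMap := by
      obtain ⟨y, rfl⟩ := ha
      exact ⟨X₀ (B x) + c • y, by simp⟩
    have h3 := key_quad hT.1 x _ hs
    have hxs : x - (A (X₀ (B x)) + c • a) = v - c • a := by rw [hv]; abel
    rw [hxs] at h3
    linarith
  rw [Submodule.mem_orthogonal]
  intro u hu
  suffices hz0 : ⟪W v, u⟫ = 0 by
    rw [← inner_conj_symm, hz0, map_zero]
  by_contra hne
  set z : ℂ := ⟪W v, u⟫ with hz
  set nsz : ℝ := Complex.normSq z with hnsz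
  have hnsz_pos : 0 < nsz := Complex.normSq_pos.mpr hne
  set w : ℝ := (⟪W u, u⟫).re with hw
  have hw0 : 0 ≤ w := by
    have := hW.2 u
    rwa [reApplyInnerSelf_apply, RCLike.re_to_complex] at this
  set r : ℝ := 1 / (w + 1) with hr
  have hrpos : 0 < r := by positivity
  have hrw : r * (w + 1) = 1 := by
    rw [hr]; field_simp
  have hr2 : r * w = 1 - r := by nlinarith
  set c : ℂ := (r : ℂ) * (starRingEnd ℂ) z with hc
  have hexp : ⟪W (v - c • u), v - c • u⟫
      = ⟪W v, v⟫ - c * ⟪W v, u⟫ - (starRingEnd ℂ) c * ⟪W u, v⟫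
        + (starRingEnd ℂ) c * c * ⟪W u, u⟫ := by
    simp only [map_sub, map_smul, inner_sub_left, inner_sub_right, inner_smul_left,
      inner_smul_right]
    ring
  have hWuv : ⟪W u, v⟫ = (starRingEnd ℂ) z := by
    rw [sa_inner_symm hW.isSelfAdjoint u v, ← inner_conj_symm, hz]
  have hcz : c * z = ((r * nsz : ℝ) : ℂ) := by
    rw [hc, mul_assoc, mul_comm ((starRingEnd ℂ) z) z, Complex.mul_conj]
    push_cast
    ring
  have hnc : (starRingEnd ℂ) c * c = ((r * r * nsz : ℝ) : ℂ) := by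
    rw [hc, map_mul, Complex.conj_ofReal, Complex.conj_conj]
    rw [show (r : ℂ) * z * ((r : ℂ) * (starRingEnd ℂ) z)
        = ((r : ℂ) * (r : ℂ)) * (z * (starRingEnd ℂ) z) from by ring, Complex.mul_conj]
    push_cast
    ring
  have hineq := hbase c u hu
  have hre : (⟪W (v - c • u), v - c • u⟫).re
      = (⟪W v, v⟫).re - (r * nsz) - (r * nsz) + (r * r * nsz) * w := by
    rw [hexp, ← hz, hWuv, show (starRingEnd ℂ) c * (starRingEnd ℂ) z
        = (starRingEnd ℂ) (c * z) from (map_mul _ _ _).symm, hcz, hnc,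
      Complex.conj_ofReal]
    rw [Complex.add_re, Complex.sub_re, Complex.sub_re, Complex.ofReal_re,
      Complex.re_ofReal_mul, ← hw]
  rw [hre] at hineq
  have hkey : 0 ≤ -2 * (r * nsz) + (r * nsz) * (r * w) := by
    have : (r * r * nsz) * w = (r * nsz) * (r * w) := by ring
    linarith
  rw [hr2] at hkey
  nlinarith [mul_pos hrpos hnsz_pos]


lemma compat_of_decomp (W A : H →L[ℂ] H) (hW : W.IsPositive)
    (hA : IsClosed (LinearMap.range (A).toLinearMap : Set H))
    (hdec : ∀ x : H, ∃ s ∈ LinearMap.range (A).toLinearMap, W (x - s) ∈ (LinearMap.range (A).toLinearMap)ᗮ) :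
    Compatible W (LinearMap.range (A).toLinearMap) := by
  set S := LinearMap.range (A).toLinearMap with hS
  set K := LinearMap.ker (adjoint A ∘L W).toLinearMap with hK
  have hKmem : ∀ x : H, x ∈ K ↔ W x ∈ Sᗮ := by
    intro x
    rw [hK, LinearMap.mem_ker, ContinuousLinearMap.coe_coe, comp_apply,
      ← ContinuousLinearMap.coe_coe (adjoint A), ← LinearMap.mem_ker, ker_adjoint_eq]
  have hKc : IsClosed (K : Set H) := ContinuousLinearMap.isClosed_ker _
  set N := S ⊓ K with hN
  have hNc : IsClosed (N : Set H) := by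
    have h : (N : Set H) = (S : Set H) ∩ (K : Set H) := rfl
    rw [h]; exact hA.inter hKc
  haveI : CompleteSpace N := hNc.completeSpace_coe
  set M := K ⊓ Nᗮ with hM
  have hMc : IsClosed (M : Set H) := by
    have h : (M : Set H) = (K : Set H) ∩ (Nᗮ : Set H) := rfl
    rw [h]; exact hKc.inter N.isClosed_orthogonal
  have hMK : M ≤ K := inf_le_left
  have hNK : N ≤ K := inf_le_right
  have hNS : N ≤ S := inf_le_left
  have hdisj : Disjoint S M := by
    rw [Submodule.disjoint_def]
    intro x hxS hxM
    have hxN : x ∈ N := Submodule.mem_inf.mpr ⟨hxS, hMK hxM⟩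
    have hxNo : x ∈ Nᗮ := (Submodule.mem_inf.mp hxM).2
    exact inner_self_eq_zero.mp ((Submodule.mem_orthogonal _ _).mp hxNo x hxN)
  have hcod : Codisjoint S M := by
    rw [codisjoint_iff, eq_top_iff]
    rintro x -
    obtain ⟨s, hsS, hvK⟩ := hdec x
    set k := x - s with hk
    have hkK : k ∈ K := (hKmem k).mpr hvK
    set n := (↑(Submodule.orthogonalProjectionOnto N k) : H) with hn
    have hnN : n ∈ N := (Submodule.orthogonalProjectionOnto N k).2
    have hmM : k - n ∈ M := by
      refine Submodule.mem_inf.mpr ⟨K.sub_mem hkK (hNK hnN), ?_⟩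
      exact Submodule.sub_starProjection_mem_orthogonal (K := N) k
    refine Submodule.mem_sup.mpr ⟨s + n, S.add_mem hsS (hNS hnN), k - n, hmM, ?_⟩
    rw [hk]; abel
  have hcompl : IsCompl S M := ⟨hdisj, hcod⟩
  set Qp := S.linearProjOfClosedCompl M hcompl hA hMc with hQp
  set Q : H →L[ℂ] H := S.subtypeL ∘L Qp with hQdef
  have hQpcoe : ∀ x : H, Qp x = S.linearProjOfIsCompl M hcompl x := by
    intro x
    rw [hQp, Submodule.coe_continuous_linearProjOfClosedCompl']
    rfl
  have hQS : ∀ y ∈ S, Q y = y := by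
    intro y hy
    have h1 : Qp y = ⟨y, hy⟩ := by
      rw [hQpcoe]
      exact Submodule.linearProjOfIsCompl_apply_left hcompl ⟨y, hy⟩
    rw [hQdef, comp_apply, h1]
    rfl
  have hQM : ∀ y ∈ M, Q y = 0 := by
    intro y hy
    have h1 : Qp y = 0 := by
      rw [hQpcoe]
      exact Submodule.linearProjOfIsCompl_apply_right hcompl ⟨y, hy⟩
    rw [hQdef, comp_apply, h1]
    rfl
  have hQmem : ∀ x, Q x ∈ S := fun x => (Qp x).2
  have hidem : IsIdempotentElem Q := by
    rw [IsIdempotentElem]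
    ext x
    exact hQS _ (hQmem x)
  have hrange : LinearMap.range (Q).toLinearMap = S := by
    apply le_antisymm
    · rintro _ ⟨x, rfl⟩; exact hQmem x
    · intro y hy; exact ⟨y, hQS y hy⟩
  have hsub : ∀ x, x - Q x ∈ M := by
    intro x
    have hx : x ∈ S ⊔ M := by rw [hcompl.sup_eq_top]; trivial
    obtain ⟨p, hp, m, hm, hx⟩ := Submodule.mem_sup.mp hx
    have hq : Q x = p := by rw [← hx, map_add, hQS p hp, hQM m hm, add_zero]
    rw [hq, ← hx]
    simpa using hm
  have hWM : ∀ m ∈ M, W m ∈ Sᗮ := fun m hm => (hKmem m).mp (hMK hm)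
  refine ⟨Q, hidem, hrange, isSelfAdjoint_iff_isSymmetric.mpr (fun x y => ?_)⟩
  show ⟪W (Q x), y⟫ = ⟪x, W (Q y)⟫
  have e1 : ⟪W (Q x), y⟫ = ⟪W (Q x), Q y⟫ + ⟪W (Q x), y - Q y⟫ := by
    rw [← inner_add_right]; congr 1; abel
  have e2 : ⟪x, W (Q y)⟫ = ⟪Q x, W (Q y)⟫ + ⟪x - Q x, W (Q y)⟫ := by
    rw [← inner_add_left]; congr 1; abel
  have z1 : ⟪W (Q x), y - Q y⟫ = 0 := by
    rw [sa_inner_symm hW.isSelfAdjoint]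
    exact (Submodule.mem_orthogonal _ _).mp (hWM _ (hsub y)) (Q x) (hQmem x)
  have z2 : ⟪x - Q x, W (Q y)⟫ = 0 := by
    rw [← sa_inner_symm hW.isSelfAdjoint, ← inner_conj_symm,
      (Submodule.mem_orthogonal _ _).mp (hWM _ (hsub x)) (Q y) (hQmem y), map_zero]
  have z3 : ⟪W (Q x), Q y⟫ = ⟪Q x, W (Q y)⟫ := sa_inner_symm hW.isSelfAdjoint _ _
  rw [e1, e2, z1, z2, z3]


lemma shorted_eq_of_compat (W Q T : H →L[ℂ] H) (hW : W.IsPositive)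
    (hQ : IsIdempotentElem Q) (hsa : IsSelfAdjoint (W ∘L Q))
    (hT : IsShorted W (LinearMap.range (Q).toLinearMap) T) :
    T = W ∘L (1 - Q) := by
  set S := LinearMap.range (Q).toLinearMap with hS
  have hcomm : adjoint Q * W = W * Q := by
    have h := hsa.adjoint_eq
    rwa [adjoint_comp, hW.isSelfAdjoint.adjoint_eq] at h
  have h1 : adjoint Q * (W * Q) = W * Q := by
    rw [← mul_assoc, hcomm, mul_assoc, hQ.eq]
  have hadj1Q : adjoint (1 - Q) = 1 - adjoint Q := by
    rw [← star_eq_adjoint, star_sub, star_one, star_eq_adjoint]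
  have hT'eq : (1 - adjoint Q) * (W * (1 - Q)) = W * (1 - Q) := by
    have expand : (1 - adjoint Q) * (W * (1 - Q))
        = W * (1 - Q) - (adjoint Q * W - adjoint Q * (W * Q)) := by noncomm_ring
    rw [expand, hcomm, h1, sub_self, sub_zero]
  have hT'pos : (W * (1 - Q)).IsPositive := by
    have h := hW.adjoint_conj (1 - Q)
    rw [hadj1Q] at h
    have e : (1 - adjoint Q) ∘L W ∘L (1 - Q) = W * (1 - Q) := by
      rw [← hT'eq]; rfl
    rwa [e] at h
  have hWQpos : (W * Q).IsPositive := by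
    have h := hW.adjoint_conj Q
    have e : adjoint Q ∘L W ∘L Q = W * Q := by
      rw [← h1]; rfl
    rwa [e] at h
  have hQfix : ∀ u ∈ S, Q u = u := by
    rintro u ⟨y, rfl⟩
    exact congrFun (congrArg DFunLike.coe hQ.eq) y
  have hrangeT' : ∀ x, (W * (1 - Q)) x ∈ Sᗮ := by
    intro x
    rw [Submodule.mem_orthogonal]
    intro u hu
    have e2 : (W * (1 - Q)) x
        = W ((1 - Q) x) - adjoint Q (W ((1 - Q) x)) := by
      conv_lhs => rw [← hT'eq]
      simp [ContinuousLinearMap.mul_apply]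
    rw [e2, inner_sub_right, adjoint_inner_right, hQfix u hu, sub_self]
  have hmax : ∀ X ∈ MSet W S, ((W * (1 - Q)) - X).IsPositive := by
    intro X hX
    obtain ⟨hX1, hX2, hX3⟩ := hX
    have hQX : adjoint Q * X = 0 := by
      ext x
      exact adjoint_vanish (hX3 ⟨x, rfl⟩)
    have hXQ : X * Q = 0 := by
      have h := congrArg star hQX
      rw [star_mul, star_zero, hX1.isSelfAdjoint.star_eq, ← star_eq_adjoint, star_star] at h
      exact h
    have key : (W * (1 - Q)) - X = (1 - adjoint Q) * ((W - X) * (1 - Q)) := by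
      have expand : (1 - adjoint Q) * ((W - X) * (1 - Q))
          = (1 - adjoint Q) * (W * (1 - Q))
            - (X - X * Q - adjoint Q * X + adjoint Q * (X * Q)) := by
        noncomm_ring
      rw [expand, hT'eq, hXQ, hQX, mul_zero, sub_zero, sub_zero, add_zero]
    have h := hX2.adjoint_conj (1 - Q)
    rw [hadj1Q] at h
    have e : (1 - adjoint Q) ∘L (W - X) ∘L (1 - Q)
        = (1 - adjoint Q) * ((W - X) * (1 - Q)) := rfl
    rw [e] at h
    rwa [← key] at h
  have hT'mem : (W * (1 - Q)) ∈ MSet W S := by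
    refine ⟨hT'pos, ?_, ?_⟩
    · have e : W - W * (1 - Q) = W * Q := by noncomm_ring
      rw [e]; exact hWQpos
    · rintro _ ⟨x, rfl⟩; exact hrangeT' x
  have h5 := hT.2 (W * (1 - Q)) hT'mem
  have h6 := hmax T hT.1
  have hzero : T - W * (1 - Q) = 0 := by
    apply op_eq_zero_of_inner _ h5.isSelfAdjoint
    intro x
    have a1 := h5.2 x
    have a2 := h6.2 x
    rw [reApplyInnerSelf_apply, RCLike.re_to_complex] at a1 a2
    have e : (W * (1 - Q) - T) x = -((T - W * (1 - Q)) x) := by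
      simp only [sub_apply]; abel
    rw [e, inner_neg_left, Complex.neg_re] at a2
    linarith
  have hfin : T = W * (1 - Q) := by rwa [sub_eq_zero] at hzero
  exact hfin


lemma Tfacts (W A B T Q : H →L[ℂ] H) (hW : W.IsPositive)
    (hker : LinearMap.ker (B).toLinearMap = LinearMap.ker (adjoint A ∘L W).toLinearMap)
    (hQ : IsIdempotentElem Q) (hrange : LinearMap.range (Q).toLinearMap = LinearMap.range (A).toLinearMap)
    (hsa : IsSelfAdjoint (W ∘L Q)) (hT : IsShorted W (LinearMap.range (A).toLinearMap) T) :
    T = W * (1 - Q) ∧ B * (1 - Q) = 0 ∧ adjoint Q * W = W * Q := by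
  have hTQ : T = W * (1 - Q) := by
    have h := shorted_eq_of_compat W Q T hW hQ hsa (by rw [hrange]; exact hT)
    exact h
  have hcomm : adjoint Q * W = W * Q := by
    have h := hsa.adjoint_eq
    rwa [adjoint_comp, hW.isSelfAdjoint.adjoint_eq] at h
  have hTrange : LinearMap.range (T).toLinearMap ≤ (LinearMap.range (A).toLinearMap)ᗮ := hT.1.2.2
  have hB1Q : B * (1 - Q) = 0 := by
    ext x
    have hmem : (1 - Q) x ∈ LinearMap.ker (B).toLinearMap := by
      rw [hker, LinearMap.mem_ker, ContinuousLinearMap.coe_coe, comp_apply]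
      have hWx : W ((1 - Q) x) = T x := by
        rw [hTQ]; rfl
      rw [hWx]
      exact adjoint_vanish (hTrange ⟨x, rfl⟩)
    exact hmem
  exact ⟨hTQ, hB1Q, hcomm⟩

lemma minus_min (W A B T Q X : H →L[ℂ] H) (hW : W.IsPositive)
    (hker : LinearMap.ker (B).toLinearMap = LinearMap.ker (adjoint A ∘L W).toLinearMap)
    (hQ : IsIdempotentElem Q) (hrange : LinearMap.range (Q).toLinearMap = LinearMap.range (A).toLinearMap)
    (hsa : IsSelfAdjoint (W ∘L Q)) (hT : IsShorted W (LinearMap.range (A).toLinearMap) T) :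
    MinusLE T (adjoint (A ∘L X ∘L B - 1) ∘L (W ∘L (A ∘L X ∘L B - 1))) := by
  obtain ⟨hTQ, hB1Q, hcomm⟩ := Tfacts W A B T Q hW hker hQ hrange hsa hT
  set E : H →L[ℂ] H := A ∘L X ∘L B with hE
  have hQfix : ∀ u ∈ LinearMap.range (Q).toLinearMap, Q u = u := by
    rintro u ⟨y, rfl⟩
    exact congrFun (congrArg DFunLike.coe hQ.eq) y
  have hE1Q : E * (1 - Q) = 0 := by
    ext x
    have hBx : B ((1 - Q) x) = 0 := congrFun (congrArg DFunLike.coe hB1Q) x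
    have hBx' : B x = B (Q x) := by
      have h2 := hBx
      simp only [sub_apply, one_apply, map_sub] at h2
      rwa [sub_eq_zero] at h2
    show E ((1 - Q) x) = 0
    rw [hE]
    simp [hBx']
  have hQE : Q * E = E := by
    ext x
    show Q (E x) = E x
    apply hQfix
    rw [hrange, hE]
    simp
  have hTE : T * E = 0 := by
    have h1Q : (1 - Q) * E = 0 := by
      have expand : (1 - Q) * E = E - Q * E := by noncomm_ring
      rw [expand, hQE, sub_self]
    rw [hTQ, mul_assoc, h1Q, mul_zero]
  have hsQ : IsIdempotentElem (adjoint Q) := by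
    show adjoint Q * adjoint Q = adjoint Q
    rw [← star_eq_adjoint, ← star_mul, hQ.eq]
  have hP : IsIdempotentElem (1 - adjoint Q) := hsQ.one_sub
  set Z : H →L[ℂ] H := E - 1 with hZ
  have hZQ : Z * (1 - Q) = -(1 - Q) := by
    have expand : (E - 1) * (1 - Q) = E * (1 - Q) - (1 - Q) := by noncomm_ring
    rw [hZ, expand, hE1Q, zero_sub]
  have hfact : (1 - adjoint Q) * adjoint Z = -(1 - adjoint Q) := by
    have h1 : (1 - adjoint Q) * adjoint Z = star (Z * (1 - Q)) := by
      rw [star_mul, star_sub, star_one, star_eq_adjoint, star_eq_adjoint]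
    rw [h1, hZQ, star_neg, star_sub, star_one, star_eq_adjoint]
  have hmain : (1 - adjoint Q) * (adjoint Z * (W * Z)) = T := by
    rw [← mul_assoc, hfact]
    have e1 : -(1 - adjoint Q) * (W * Z) = ((1 - adjoint Q) * W) * (1 - E) := by
      rw [hZ]; noncomm_ring
    rw [e1]
    have e2 : (1 - adjoint Q) * W = T := by
      have expand : (1 - adjoint Q) * W = W - adjoint Q * W := by noncomm_ring
      rw [expand, hcomm, hTQ]
      noncomm_ring
    rw [e2]
    have e3 : T * (1 - E) = T - T * E := by noncomm_ring
    rw [e3, hTE, sub_zero]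
  have hYsa : IsSelfAdjoint (adjoint Z ∘L (W ∘L Z)) := Y_selfadjoint W Z hW.isSelfAdjoint
  refine ⟨1 - adjoint Q, 1 - adjoint Q, hP, hP, ?_, ?_⟩
  · exact hmain.symm
  · rw [hT.1.1.isSelfAdjoint.adjoint_eq, hYsa.adjoint_eq]
    exact hmain.symm


lemma exists_pinv (f : H →L[ℂ] H) (hf : IsClosed (LinearMap.range (f).toLinearMap : Set H)) :
    ∃ D : H →L[ℂ] H, ∀ y ∈ LinearMap.range (f).toLinearMap, f (D y) = y := by
  haveI : CompleteSpace (LinearMap.range (f).toLinearMap) := hf.completeSpace_coe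
  haveI : CompleteSpace (LinearMap.ker (f).toLinearMap) :=
    (ContinuousLinearMap.isClosed_ker f).completeSpace_coe
  haveI : CompleteSpace ((LinearMap.ker (f).toLinearMap)ᗮ) :=
    (LinearMap.ker (f).toLinearMap).isClosed_orthogonal.completeSpace_coe
  set K := (LinearMap.ker (f).toLinearMap)ᗮ with hK
  set f0 : K →L[ℂ] LinearMap.range (f).toLinearMap :=
    (f ∘L K.subtypeL).codRestrict (LinearMap.range (f).toLinearMap) (fun y => ⟨_, rfl⟩) with hf0
  have hf0apply : ∀ u : K, (f0 u : H) = f u := fun u => rfl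
  have hinj : LinearMap.ker (f0).toLinearMap = ⊥ := by
    rw [Submodule.eq_bot_iff]
    intro u hu
    rw [LinearMap.mem_ker] at hu
    have h1 : f (u : H) = 0 := by
      have h2 := congrArg (fun z : LinearMap.range (f).toLinearMap => (z : H)) hu
      simpa [hf0apply] using h2
    have h2 : (u : H) ∈ LinearMap.ker (f).toLinearMap := h1
    have h3 := (Submodule.mem_orthogonal _ _).mp u.2 (u : H) h2
    exact Subtype.ext (inner_self_eq_zero.mp h3)
  have hsurj : LinearMap.range (f0).toLinearMap = ⊤ := by
    rw [Submodule.eq_top_iff']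
    rintro ⟨y, u, rfl⟩
    set u2 := u - (↑(Submodule.orthogonalProjectionOnto (LinearMap.ker (f).toLinearMap) u) : H) with hu2
    have hu2K : u2 ∈ K := Submodule.sub_starProjection_mem_orthogonal (K := LinearMap.ker (f).toLinearMap) u
    refine ⟨⟨u2, hu2K⟩, ?_⟩
    apply Subtype.ext
    rw [ContinuousLinearMap.coe_coe, hf0apply]
    show f u2 = f u
    rw [hu2, map_sub]
    have h3 : f (↑(Submodule.orthogonalProjectionOnto (LinearMap.ker (f).toLinearMap) u) : H) = 0 :=
      (Submodule.orthogonalProjectionOnto (LinearMap.ker (f).toLinearMap) u).2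
    rw [h3, sub_zero]
  set e := ContinuousLinearEquiv.ofBijective f0 hinj hsurj with he
  have hecoe : ∀ u : K, e u = f0 u := fun u =>
    congrFun (ContinuousLinearEquiv.coeFn_ofBijective f0 hinj hsurj) u
  refine ⟨K.subtypeL ∘L ((e.symm : LinearMap.range (f).toLinearMap →L[ℂ] K) ∘L
    (Submodule.orthogonalProjectionOnto (LinearMap.range (f).toLinearMap) : H →L[ℂ] LinearMap.range (f).toLinearMap)), ?_⟩
  intro y hy
  have hproj : Submodule.orthogonalProjectionOnto (LinearMap.range (f).toLinearMap) y = ⟨y, hy⟩ :=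
    Submodule.orthogonalProjectionOnto_mem_subspace_eq_self (⟨y, hy⟩ : LinearMap.range (f).toLinearMap)
  have hstep : f ((K.subtypeL ∘L ((e.symm : LinearMap.range (f).toLinearMap →L[ℂ] K) ∘L
      (Submodule.orthogonalProjectionOnto (LinearMap.range (f).toLinearMap) : H →L[ℂ] LinearMap.range (f).toLinearMap))) y)
      = (f0 (e.symm ⟨y, hy⟩) : H) := by
    rw [comp_apply, comp_apply, hproj, hf0apply]
    rfl
  rw [hstep, ← hecoe, e.apply_symm_apply]

lemma exists_X0 (W A B T Q : H →L[ℂ] H) (hW : W.IsPositive)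
    (hA : IsClosed (LinearMap.range (A).toLinearMap : Set H)) (hB : IsClosed (LinearMap.range (B).toLinearMap : Set H))
    (hker : LinearMap.ker (B).toLinearMap = LinearMap.ker (adjoint A ∘L W).toLinearMap)
    (hQ : IsIdempotentElem Q) (hrange : LinearMap.range (Q).toLinearMap = LinearMap.range (A).toLinearMap)
    (hsa : IsSelfAdjoint (W ∘L Q)) (hT : IsShorted W (LinearMap.range (A).toLinearMap) T) :
    ∃ X₀ : H →L[ℂ] H, T = adjoint (A ∘L X₀ ∘L B - 1) ∘L (W ∘L (A ∘L X₀ ∘L B - 1)) := by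
  obtain ⟨hTQ, hB1Q, hcomm⟩ := Tfacts W A B T Q hW hker hQ hrange hsa hT
  have hQfix : ∀ u ∈ LinearMap.range (Q).toLinearMap, Q u = u := by
    rintro u ⟨y, rfl⟩
    exact congrFun (congrArg DFunLike.coe hQ.eq) y
  set N : Submodule ℂ H := LinearMap.range (A).toLinearMap ⊓ LinearMap.ker (W).toLinearMap with hN
  have hNc : IsClosed (N : Set H) := by
    have h : (N : Set H) = (LinearMap.range (A).toLinearMap : Set H) ∩ (LinearMap.ker (W).toLinearMap : Set H) := rfl
    rw [h]; exact hA.inter (ContinuousLinearMap.isClosed_ker W)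
  haveI : CompleteSpace N := hNc.completeSpace_coe
  set PN : H →L[ℂ] H := N.subtypeL ∘L (Submodule.orthogonalProjectionOnto N : H →L[ℂ] N) with hPN
  have hPNmem : ∀ x, PN x ∈ N := fun x => (Submodule.orthogonalProjectionOnto N x).2
  have hPNfix : ∀ v ∈ N, PN v = v := by
    intro v hv
    exact congrArg Subtype.val (Submodule.orthogonalProjectionOnto_mem_subspace_eq_self (⟨v, hv⟩ : N))
  have hWPN : W * PN = 0 := by
    ext x
    exact (hPNmem x).2
  set Q' : H →L[ℂ] H := (1 - PN) * Q with hQ'def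
  have hQ'apply : ∀ x, Q' x = Q x - PN (Q x) := by
    intro x
    rw [hQ'def]
    simp [ContinuousLinearMap.mul_apply]
  have hWQ' : W * Q' = W * Q := by
    have e : W * Q' = (W - W * PN) * Q := by rw [hQ'def]; noncomm_ring
    rw [e, hWPN, sub_zero]
  have hkerBQ' : ∀ x ∈ LinearMap.ker (B).toLinearMap, Q' x = 0 := by
    intro x hx
    rw [hker, LinearMap.mem_ker, ContinuousLinearMap.coe_coe, comp_apply] at hx
    have hWx : W x ∈ (LinearMap.range (A).toLinearMap)ᗮ := by
      rw [← ker_adjoint_eq]; exact hx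
    have hWQx : W (Q x) = 0 := by
      have h1 : (W * Q) x = adjoint Q (W x) := by rw [← hcomm]; rfl
      have h2 : adjoint Q (W x) = 0 := adjoint_vanish (by rwa [hrange])
      calc W (Q x) = (W * Q) x := rfl
        _ = 0 := by rw [h1, h2]
    have hQxN : Q x ∈ N :=
      Submodule.mem_inf.mpr ⟨by rw [← hrange]; exact ⟨x, rfl⟩, hWQx⟩
    rw [hQ'apply, hPNfix _ hQxN, sub_self]
  have hranQ' : ∀ z, Q' z ∈ LinearMap.range (A).toLinearMap := by
    intro z
    rw [hQ'apply]
    have h1 : Q z ∈ LinearMap.range (A).toLinearMap := by rw [← hrange]; exact ⟨z, rfl⟩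
    exact Submodule.sub_mem _ h1 ((hPNmem (Q z)).1)
  obtain ⟨Ad, hAd⟩ := exists_pinv A hA
  obtain ⟨Bd, hBd⟩ := exists_pinv B hB
  set X₀ : H →L[ℂ] H := Ad ∘L (Q' ∘L Bd) with hX₀def
  have hE : A ∘L X₀ ∘L B = Q' := by
    ext x
    have h1 : B (Bd (B x)) = B x := hBd (B x) ⟨x, rfl⟩
    have h2 : Q' (Bd (B x)) = Q' x := by
      have hdiff : Bd (B x) - x ∈ LinearMap.ker (B).toLinearMap := by
        rw [LinearMap.mem_ker, ContinuousLinearMap.coe_coe, map_sub, h1, sub_self]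
      have h3 := hkerBQ' _ hdiff
      rw [map_sub] at h3
      rwa [sub_eq_zero] at h3
    show A (X₀ (B x)) = Q' x
    rw [hX₀def]
    simp only [comp_apply]
    rw [hAd _ (hranQ' _), h2]
  have hTQzero : T * Q = 0 := by
    rw [hTQ]
    have e : (W * (1 - Q)) * Q = W * Q - W * (Q * Q) := by noncomm_ring
    rw [e, hQ.eq, sub_self]
  have hTPN : T * PN = 0 := by
    ext x
    have hmem : PN x ∈ LinearMap.range (Q).toLinearMap := by rw [hrange]; exact (hPNmem x).1
    have h1 : Q (PN x) = PN x := hQfix _ hmem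
    show T (PN x) = 0
    rw [hTQ]
    calc (W * (1 - Q)) (PN x) = W (PN x - Q (PN x)) := rfl
      _ = 0 := by rw [h1, sub_self, map_zero]
  have hTQ'zero : T * Q' = 0 := by
    have e : T * Q' = T * Q - (T * PN) * Q := by rw [hQ'def]; noncomm_ring
    rw [e, hTQzero, hTPN, zero_mul, sub_zero]
  have hadjQ'T : adjoint Q' * T = 0 := by
    have h := congrArg star hTQ'zero
    rw [star_mul, star_zero, hT.1.1.isSelfAdjoint.star_eq] at h
    rwa [star_eq_adjoint] at h
  have hTQ'neg : W * (Q' - 1) = -T := by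
    have e : W * (Q' - 1) = W * Q' - W := by noncomm_ring
    rw [e, hWQ', hTQ]
    noncomm_ring
  refine ⟨X₀, ?_⟩
  rw [hE]
  have hadj : adjoint (Q' - 1) = adjoint Q' - 1 := by
    rw [← star_eq_adjoint, star_sub, star_one, star_eq_adjoint]
  have final : adjoint (Q' - 1) * (W * (Q' - 1)) = T := by
    rw [hadj, hTQ'neg]
    have expand : (adjoint Q' - 1) * (-T) = T - adjoint Q' * T := by noncomm_ring
    rw [expand, hadjQ'T, sub_zero]
  exact final.symm

end Stmt11Aux

/-- equivalence of (i) `T` is the minus-order minimum of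
`{(AXB - I)* W (AXB - I)}`; (ii) `(W, range A)` compatible; (iii) `T` is the Loewner
minimum of the same set. -/
theorem stmt11 (W A B T : H →L[ℂ] H) (hW : W.IsPositive)
    (hA : IsClosed (LinearMap.range (A).toLinearMap : Set H)) (hB : IsClosed (LinearMap.range (B).toLinearMap : Set H))
    (hker : LinearMap.ker (B).toLinearMap = LinearMap.ker (adjoint A ∘L W).toLinearMap)
    (hT : IsShorted W (LinearMap.range (A).toLinearMap) T) :
    [(∃ X₀ : H →L[ℂ] H, T = adjoint (A ∘L X₀ ∘L B - 1) ∘L (W ∘L (A ∘L X₀ ∘L B - 1))) ∧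
       ∀ X : H →L[ℂ] H,
         MinusLE T (adjoint (A ∘L X ∘L B - 1) ∘L (W ∘L (A ∘L X ∘L B - 1))),
     Compatible W (LinearMap.range (A).toLinearMap),
     (∃ X₀ : H →L[ℂ] H, T = adjoint (A ∘L X₀ ∘L B - 1) ∘L (W ∘L (A ∘L X₀ ∘L B - 1))) ∧
       ∀ X : H →L[ℂ] H,
         ((adjoint (A ∘L X ∘L B - 1) ∘L (W ∘L (A ∘L X ∘L B - 1))) - T).IsPositive].TFAE := by
  tfae_have 1 → 3 := by
    rintro ⟨hex, -⟩
    exact ⟨hex, fun X => Stmt11Aux.loewner_min W A B T hW hT X⟩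
  tfae_have 3 → 2 := by
    rintro ⟨⟨X₀, hX₀⟩, -⟩
    apply Stmt11Aux.compat_of_decomp W A hW hA
    intro x
    exact ⟨A (X₀ (B x)), ⟨X₀ (B x), rfl⟩, Stmt11Aux.variational W A B T X₀ hW hT hX₀ x⟩
  tfae_have 2 → 1 := by
    rintro ⟨Q, hQ, hrange, hsa⟩
    exact ⟨Stmt11Aux.exists_X0 W A B T Q hW hA hB hker hQ hrange hsa hT,
      fun X => Stmt11Aux.minus_min W A B T Q X hW hker hQ hrange hsa hT⟩
  tfae_finish
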